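/- Let n ≥ 1, let w : Fin n → Fin n → ℕ∞ be edge weights (with ⊤ meaning no edge), and let s : Fin n. Define d : ℕ → Fin n → ℕ∞ by d 0 v = (if v = s then 0 else ⊤) and d (k+1) v = min (d k v) (⨅_{u : Fin n} (d k u + w u v)). Then for every v : Fin n, d n v = ⨅ over all k : ℕ and all functions p : Fin (k+1) → Fin n with p 0 = s and p (Fin.last k) = v of (∑_{t : Fin k} w (p t.castSucc) (p t.succ)). That is, after n iterations d v is the shortest-path distance from s to v (and ⊤ if v is unreachable from s). -/

import Mathlib

open Finset

private def pcost {n : ℕ} (w : Fin n → Fin n → ℕ∞) (p : ℕ → Fin n) (m : ℕ) : ℕ∞ :=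
  ∑ t ∈ Finset.range m, w (p t) (p (t + 1))

section aux
variable {n : ℕ} (w : Fin n → Fin n → ℕ∞) (s : Fin n) (d : ℕ → Fin n → ℕ∞)

private lemma d_anti (hd : ∀ k v, d (k + 1) v = min (d k v) (⨅ u : Fin n, d k u + w u v)) :
    ∀ {j k : ℕ}, j ≤ k → ∀ v, d k v ≤ d j v := by
  intro j k hjk v
  induction k with
  | zero => simp_all
  | succ k ih =>
    rcases Nat.le_succ_iff.mp hjk with h | h
    · exact le_trans (by rw [hd]; exact min_le_left _ _) (ih h)
    · simp [h]

private lemma d_le_pcost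
    (hd0 : ∀ v, d 0 v = if v = s then 0 else ⊤)
    (hd : ∀ k v, d (k + 1) v = min (d k v) (⨅ u : Fin n, d k u + w u v)) :
    ∀ (m k : ℕ) (v : Fin n) (p : ℕ → Fin n), m ≤ k → p 0 = s → p m = v →
      d k v ≤ pcost w p m := by
  intro m
  induction m with
  | zero =>
    intro k v p _ h0 hm
    have hvs : v = s := hm ▸ h0
    have : d k v ≤ d 0 v := d_anti w d hd (Nat.zero_le k) v
    simpa [pcost, hvs, hd0] using this
  | succ m ih =>
    intro k v p hk h0 hm
    have h1 : d k v ≤ d (m + 1) v := d_anti w d hd hk v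
    have h2 : d (m + 1) v ≤ d m (p m) + w (p m) v := by
      rw [hd]
      exact le_trans (min_le_right _ _) (iInf_le _ (p m))
    have h3 : d m (p m) ≤ pcost w p m := ih m (p m) p le_rfl h0 rfl
    calc d k v ≤ d m (p m) + w (p m) v := le_trans h1 h2
      _ ≤ pcost w p m + w (p m) (p (m + 1)) := by
          rw [hm]; exact add_le_add_left h3 _
      _ = pcost w p (m + 1) := (Finset.sum_range_succ _ m).symm

/-- splice lemma: after `n` iterations, `d n v` is below the cost of any path. -/
private lemma d_le_pcost_all (hn : 1 ≤ n)
    (hd0 : ∀ v, d 0 v = if v = s then 0 else ⊤)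
    (hd : ∀ k v, d (k + 1) v = min (d k v) (⨅ u : Fin n, d k u + w u v)) :
    ∀ (m : ℕ) (v : Fin n) (p : ℕ → Fin n), p 0 = s → p m = v →
      d n v ≤ pcost w p m := by
  intro m
  induction m using Nat.strong_induction_on with
  | _ m IH =>
    intro v p h0 hm
    rcases le_or_gt m n with hmn | hmn
    · exact d_le_pcost w s d hd0 hd m n v p hmn h0 hm
    · -- pigeonhole: some vertex repeats among p 0, ..., p n
      obtain ⟨a, ha, b, hb, hab, hpab⟩ :=
        Finset.exists_ne_map_eq_of_card_lt_of_maps_to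
          (s := Finset.range (n + 1)) (t := (Finset.univ : Finset (Fin n)))
          (by simp) (fun a _ => Finset.mem_univ (p a))
      simp only [Finset.mem_range, Nat.lt_succ_iff] at ha hb
      -- wlog a < b
      obtain ⟨i, j, hij, hin : i ≤ n, hjn : j ≤ n, hp : p i = p j⟩ :
          ∃ i j, i < j ∧ i ≤ n ∧ j ≤ n ∧ p i = p j := by
        rcases lt_or_gt_of_ne hab with h | h
        · exact ⟨a, b, h, ha, hb, hpab⟩
        · exact ⟨b, a, h, hb, ha, hpab.symm⟩
      set e := j - i with he
      have hepos : 1 ≤ e := Nat.le_sub_of_add_le (by omega)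
      have hie : i + e = j := by omega
      set q : ℕ → Fin n := fun t => if t ≤ i then p t else p (t + e) with hq
      have hjm : j < m := lt_of_le_of_lt hjn hmn
      set m' := m - e with hm'
      have him' : i < m' := by omega
      have hq0 : q 0 = s := by simp [hq, h0]
      have hqm' : q m' = v := by
        have : ¬ m' ≤ i := by omega
        simp only [hq, this, if_false]
        have : m' + e = m := by omega
        rw [this, hm]
      have hcost : pcost w q m' ≤ pcost w p m := by
        have hsplit : pcost w q m' =
            (∑ t ∈ Finset.range i, w (q t) (q (t + 1))) +
            ∑ t ∈ Finset.Ico i m', w (q t) (q (t + 1)) := by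
          rw [pcost, ← Finset.sum_range_add_sum_Ico _ (le_of_lt him')]
        have hsplit' : pcost w p m =
            (∑ t ∈ Finset.range i, w (p t) (p (t + 1))) +
            ((∑ t ∈ Finset.Ico i j, w (p t) (p (t + 1))) +
             ∑ t ∈ Finset.Ico j m, w (p t) (p (t + 1))) := by
          rw [pcost, ← Finset.sum_range_add_sum_Ico _ (show i ≤ m by omega),
            ← Finset.sum_Ico_consecutive _ (le_of_lt hij) (le_of_lt hjm)]
        have h1 : ∀ t ∈ Finset.range i, w (q t) (q (t + 1)) = w (p t) (p (t + 1)) := by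
          intro t ht
          rw [Finset.mem_range] at ht
          simp only [hq]
          rw [if_pos (show t ≤ i by omega), if_pos (show t + 1 ≤ i by omega)]
        have h2 : ∑ t ∈ Finset.Ico i m', w (q t) (q (t + 1)) =
            ∑ t ∈ Finset.Ico j m, w (p t) (p (t + 1)) := by
          rw [Finset.sum_Ico_eq_sum_range, Finset.sum_Ico_eq_sum_range]
          have hlen : m' - i = m - j := by omega
          rw [hlen]
          apply Finset.sum_congr rfl
          intro t _
          have hq1 : q (i + t) = p (j + t) := by
            rcases Nat.eq_zero_or_pos t with rfl | ht
            · simpa [hq] using hp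
            · have : ¬ i + t ≤ i := by omega
              simp only [hq, this, if_false]
              congr 1; omega
          have hq2 : q (i + t + 1) = p (j + t + 1) := by
            have : ¬ i + t + 1 ≤ i := by omega
            simp only [hq, this, if_false]
            congr 1; omega
          rw [hq1, hq2]
        rw [hsplit, hsplit', Finset.sum_congr rfl h1, h2]
        exact add_le_add_right le_add_self _
      exact le_trans (IH m' (by omega) v q hq0 hqm') hcost

/-- lower bound: `d k v` is `⊤` or at least the cost of some path. -/
private lemma pcost_le_d (hn : 1 ≤ n)
    (hd0 : ∀ v, d 0 v = if v = s then 0 else ⊤)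
    (hd : ∀ k v, d (k + 1) v = min (d k v) (⨅ u : Fin n, d k u + w u v)) :
    ∀ (k : ℕ) (v : Fin n), d k v = ⊤ ∨
      ∃ (m : ℕ) (p : ℕ → Fin n), p 0 = s ∧ p m = v ∧ pcost w p m ≤ d k v := by
  intro k
  induction k with
  | zero =>
    intro v
    by_cases hvs : v = s
    · refine Or.inr ⟨0, fun _ => s, rfl, by rw [hvs], ?_⟩
      simp [pcost, hd0, hvs]
    · left; simp [hd0, hvs]
  | succ k ih =>
    intro v
    haveI : Nonempty (Fin n) := ⟨⟨0, hn⟩⟩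
    obtain ⟨u₀, hu₀⟩ := Finite.exists_min (fun u : Fin n => d k u + w u v)
    have hinf : (⨅ u : Fin n, d k u + w u v) = d k u₀ + w u₀ v :=
      le_antisymm (iInf_le _ u₀) (le_iInf hu₀)
    rcases le_total (d k v) (d k u₀ + w u₀ v) with hle | hle
    · have hdk : d (k + 1) v = d k v := by rw [hd, hinf, min_eq_left hle]
      rw [hdk]; exact ih v
    · have hdk : d (k + 1) v = d k u₀ + w u₀ v := by rw [hd, hinf, min_eq_right hle]
      rcases ih u₀ with htop | ⟨m, p, h0, hm, hc⟩
      · left; rw [hdk, htop, top_add]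
      · right
        refine ⟨m + 1, fun t => if t ≤ m then p t else v, by simp [h0], by simp, ?_⟩
        rw [hdk, pcost, Finset.sum_range_succ]
        have h1 : ∀ t ∈ Finset.range m,
            w (if t ≤ m then p t else v) (if t + 1 ≤ m then p (t + 1) else v)
              = w (p t) (p (t + 1)) := by
          intro t ht
          rw [Finset.mem_range] at ht
          rw [if_pos (show t ≤ m by omega), if_pos (show t + 1 ≤ m by omega)]
        rw [Finset.sum_congr rfl h1, if_pos (le_refl m), if_neg (show ¬ m + 1 ≤ m by omega), hm]
        exact add_le_add_left hc _
end aux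

/-- Correctness of the tropical (min-plus) shortest-path iteration: after `n`
iterations, `d n v` is the shortest-path distance from `s` to `v` (and `⊤` if
`v` is unreachable from `s`). -/
theorem minplus_iteration_shortest_path (n : ℕ) (hn : 1 ≤ n)
    (w : Fin n → Fin n → ℕ∞) (s : Fin n) (d : ℕ → Fin n → ℕ∞)
    (hd0 : ∀ v, d 0 v = if v = s then 0 else ⊤)
    (hd : ∀ k v, d (k + 1) v = min (d k v) (⨅ u : Fin n, d k u + w u v)) :
    ∀ v : Fin n, d n v =
      ⨅ (k : ℕ) (p : Fin (k + 1) → Fin n) (_ : p 0 = s) (_ : p (Fin.last k) = v),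
        ∑ t : Fin k, w (p t.castSucc) (p t.succ) := by
  intro v
  apply le_antisymm
  · -- d n v ≤ every path cost
    refine le_iInf fun k => le_iInf fun p => le_iInf fun h0 => le_iInf fun hlast => ?_
    -- turn the Fin path into an ℕ path
    set q : ℕ → Fin n := fun t => p ⟨min t k, by omega⟩ with hqdef
    have hq0 : q 0 = s := by
      have : (⟨min 0 k, by omega⟩ : Fin (k + 1)) = 0 := by
        ext; simp
      rw [hqdef]; simp only; rw [this, h0]
    have hqk : q k = v := by
      have : (⟨min k k, by omega⟩ : Fin (k + 1)) = Fin.last k := by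
        ext; simp [Fin.last]
      rw [hqdef]; simp only; rw [this, hlast]
    have hsum : pcost w q k = ∑ t : Fin k, w (p t.castSucc) (p t.succ) := by
      rw [pcost, ← Fin.sum_univ_eq_sum_range (fun t => w (q t) (q (t + 1))) k]
      apply Finset.sum_congr rfl
      intro t _
      have e1 : q t.val = p t.castSucc := by
        have : (⟨min t.val k, by omega⟩ : Fin (k + 1)) = t.castSucc := by
          ext; simp [Nat.min_eq_left (le_of_lt t.isLt)]
        rw [hqdef]; simp only; rw [this]
      have e2 : q (t.val + 1) = p t.succ := by
        have : (⟨min (t.val + 1) k, by omega⟩ : Fin (k + 1)) = t.succ := by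
          ext; simp [Nat.min_eq_left t.isLt]
        rw [hqdef]; simp only; rw [this]
      rw [e1, e2]
    rw [← hsum]
    exact d_le_pcost_all w s d hn hd0 hd k v q hq0 hqk
  · -- some path cost ≤ d n v
    rcases pcost_le_d w s d hn hd0 hd n v with htop | ⟨m, p, h0, hm, hc⟩
    · rw [htop]; exact le_top
    · refine le_trans ?_ hc
      refine le_trans (iInf_le _ m) ?_
      refine le_trans (iInf_le _ (fun t : Fin (m + 1) => p t.val)) ?_
      refine le_trans (iInf_le _ (by simpa using h0)) ?_
      refine le_trans (iInf_le _ (by simpa [Fin.last] using hm)) ?_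
      rw [pcost, ← Fin.sum_univ_eq_sum_range (fun t => w (p t) (p (t + 1))) m]
      apply le_of_eq
      apply Finset.sum_congr rfl
      intro t _
      rfl
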